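/- The unique solution R on [0, π/2] of the second-order ODE R''(θ) = −R(θ)·(1 + 3 m₋² m₊² / (m₋² cos²θ + m₊² sin²θ)²) with initial conditions R(0) = 0 and R'(0) = 1/m₋ is R(θ) = sin(θ)cos(θ)/(m₊² sin²θ + m₋² cos²θ)^{1/2}. -/

import Mathlib

open Real Set

noncomputable def Dd (mm mp θ : ℝ) : ℝ := mp ^ 2 * Real.sin θ ^ 2 + mm ^ 2 * Real.cos θ ^ 2

noncomputable def Sc (mm mp θ : ℝ) : ℝ := Real.sin θ * Real.cos θ / Real.sqrt (Dd mm mp θ)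

noncomputable def Sc' (mm mp θ : ℝ) : ℝ :=
  ((Real.cos θ ^ 2 - Real.sin θ ^ 2) * Dd mm mp θ
    - (mp ^ 2 - mm ^ 2) * Real.sin θ ^ 2 * Real.cos θ ^ 2) /
  (Dd mm mp θ * Real.sqrt (Dd mm mp θ))

lemma Dd_ge {mm mp : ℝ} (θ : ℝ) : min (mm ^ 2) (mp ^ 2) ≤ Dd mm mp θ := by
  have key : min (mm ^ 2) (mp ^ 2) * (Real.sin θ ^ 2 + Real.cos θ ^ 2) ≤ Dd mm mp θ := by
    unfold Dd
    have h1 : min (mm ^ 2) (mp ^ 2) ≤ mp ^ 2 := min_le_right _ _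
    have h2 : min (mm ^ 2) (mp ^ 2) ≤ mm ^ 2 := min_le_left _ _
    nlinarith [sq_nonneg (Real.sin θ), sq_nonneg (Real.cos θ)]
  rwa [Real.sin_sq_add_cos_sq, mul_one] at key

lemma Dd_pos {mm mp : ℝ} (hmm : 0 < mm) (hmp : 0 < mp) (θ : ℝ) : 0 < Dd mm mp θ :=
  lt_of_lt_of_le (lt_min (by positivity) (by positivity)) (Dd_ge θ)

lemma hasDerivAt_Dd (mm mp θ : ℝ) :
    HasDerivAt (Dd mm mp) (2 * (mp ^ 2 - mm ^ 2) * Real.sin θ * Real.cos θ) θ := by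
  have h1 := (((Real.hasDerivAt_sin θ).pow 2).const_mul (mp ^ 2)).add
      (((Real.hasDerivAt_cos θ).pow 2).const_mul (mm ^ 2))
  exact h1.congr_deriv (by ring)

lemma hasDerivAt_Sc {mm mp : ℝ} (hmm : 0 < mm) (hmp : 0 < mp) (θ : ℝ) :
    HasDerivAt (Sc mm mp) (Sc' mm mp θ) θ := by
  have hD := Dd_pos hmm hmp θ
  have hr : 0 < Real.sqrt (Dd mm mp θ) := Real.sqrt_pos.2 hD
  have hr2 : Real.sqrt (Dd mm mp θ) * Real.sqrt (Dd mm mp θ) = Dd mm mp θ :=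
    Real.mul_self_sqrt hD.le
  have hnum : HasDerivAt (fun θ => Real.sin θ * Real.cos θ)
      (Real.cos θ ^ 2 - Real.sin θ ^ 2) θ :=
    ((Real.hasDerivAt_sin θ).mul (Real.hasDerivAt_cos θ)).congr_deriv (by ring)
  have hsq : HasDerivAt (fun θ => Real.sqrt (Dd mm mp θ))
      (2 * (mp ^ 2 - mm ^ 2) * Real.sin θ * Real.cos θ / (2 * Real.sqrt (Dd mm mp θ))) θ :=
    (hasDerivAt_Dd mm mp θ).sqrt hD.ne'
  have := hnum.div hsq hr.ne'
  refine this.congr_deriv ?_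
  unfold Sc'
  rw [Real.sq_sqrt hD.le]
  field_simp
  linear_combination (Real.cos θ ^ 2 - Real.sin θ ^ 2) * hr2

lemma hasDerivAt_Sc' {mm mp : ℝ} (hmm : 0 < mm) (hmp : 0 < mp) (θ : ℝ) :
    HasDerivAt (Sc' mm mp)
      (-(Sc mm mp θ) * (1 + 3 * mm ^ 2 * mp ^ 2 /
        (mm ^ 2 * Real.cos θ ^ 2 + mp ^ 2 * Real.sin θ ^ 2) ^ 2)) θ := by
  have hD := Dd_pos hmm hmp θ
  have hr : 0 < Real.sqrt (Dd mm mp θ) := Real.sqrt_pos.2 hD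
  have hr2 : Real.sqrt (Dd mm mp θ) * Real.sqrt (Dd mm mp θ) = Dd mm mp θ :=
    Real.mul_self_sqrt hD.le
  have hsc : Real.sin θ ^ 2 + Real.cos θ ^ 2 = 1 := Real.sin_sq_add_cos_sq θ
  have hN : HasDerivAt (fun θ => (Real.cos θ ^ 2 - Real.sin θ ^ 2) * Dd mm mp θ
      - (mp ^ 2 - mm ^ 2) * Real.sin θ ^ 2 * Real.cos θ ^ 2)
      (-4 * Real.sin θ * Real.cos θ * Dd mm mp θ) θ := by
    have h1 : HasDerivAt (fun θ => Real.cos θ ^ 2 - Real.sin θ ^ 2)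
        (2 * Real.cos θ * (-Real.sin θ) - 2 * Real.sin θ * Real.cos θ) θ := by
      exact (((Real.hasDerivAt_cos θ).pow 2).sub ((Real.hasDerivAt_sin θ).pow 2)).congr_deriv (by ring)
    have h2 := (((Real.hasDerivAt_sin θ).pow 2).const_mul (mp ^ 2 - mm ^ 2)).mul
      ((Real.hasDerivAt_cos θ).pow 2)
    have h3 := (h1.mul (hasDerivAt_Dd mm mp θ)).sub h2
    refine h3.congr_deriv ?_
    unfold Dd; simp only [Pi.pow_apply]; ring
  have hsq : HasDerivAt (fun θ => Real.sqrt (Dd mm mp θ))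
      (2 * (mp ^ 2 - mm ^ 2) * Real.sin θ * Real.cos θ / (2 * Real.sqrt (Dd mm mp θ))) θ :=
    (hasDerivAt_Dd mm mp θ).sqrt hD.ne'
  have hden := (hasDerivAt_Dd mm mp θ).mul hsq
  have hdenne : Dd mm mp θ * Real.sqrt (Dd mm mp θ) ≠ 0 := by positivity
  have hfin := hN.div hden hdenne
  refine hfin.congr_deriv ?_
  unfold Sc
  simp only [Pi.mul_apply]
  set s := Real.sin θ with hs
  set c := Real.cos θ with hc
  set r := Real.sqrt (Dd mm mp θ) with hrdef
  set D := Dd mm mp θ with hDdef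
  have hDval : D = mp ^ 2 * s ^ 2 + mm ^ 2 * c ^ 2 := rfl
  have hD' : mm ^ 2 * c ^ 2 + mp ^ 2 * s ^ 2 ≠ 0 := by rw [add_comm, ← hDval]; exact hD.ne'
  have hE : mm ^ 2 * c ^ 2 + mp ^ 2 * s ^ 2 = D := by rw [hDval]; ring
  rw [hE]
  field_simp
  linear_combination
    (s * c * (-3 * D ^ 2 - 2 * (mp ^ 2 - mm ^ 2) * ((c ^ 2 - s ^ 2) * D - (mp ^ 2 - mm ^ 2) * s ^ 2 * c ^ 2) + 3 * mp ^ 2 * mm ^ 2)) * hr2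
    + (3 * s * c * (-(D ^ 2 + D * (mp ^ 2 * s ^ 2 + mm ^ 2 * c ^ 2) + (mp ^ 2 * s ^ 2 + mm ^ 2 * c ^ 2) ^ 2) - (mp ^ 2 - mm ^ 2) * (c ^ 2 - s ^ 2) * (D + (mp ^ 2 * s ^ 2 + mm ^ 2 * c ^ 2))
        + mp ^ 2 * mm ^ 2 + (mp ^ 2 - mm ^ 2) ^ 2 * s ^ 2 * c ^ 2)) * hDval
    + (-3 * s * c * (mp ^ 2 * s ^ 2 + mm ^ 2 * c ^ 2) * mp ^ 2 * mm ^ 2 * (s ^ 2 + c ^ 2 + 1)) * hsc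

/-- The unique solution `R` on `[0, π/2]` of the second-order ODE
`R'' = -R (1 + 3 m₋² m₊² / (m₋² cos²θ + m₊² sin²θ)²)` with `R(0) = 0` and
`R'(0) = 1/m₋` is `R(θ) = sin θ cos θ / (m₊² sin²θ + m₋² cos²θ)^{1/2}`. -/
theorem statement4 (mm mp : ℝ) (hmm : 0 < mm) (hmp : 0 < mp)
    (R R' : ℝ → ℝ)
    (hR : ∀ θ ∈ Set.Icc (0 : ℝ) (π / 2), HasDerivAt R (R' θ) θ)
    (hR' : ∀ θ ∈ Set.Icc (0 : ℝ) (π / 2),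
      HasDerivAt R'
        (-(R θ) * (1 + 3 * mm ^ 2 * mp ^ 2 /
          (mm ^ 2 * Real.cos θ ^ 2 + mp ^ 2 * Real.sin θ ^ 2) ^ 2)) θ)
    (h0 : R 0 = 0) (h0' : R' 0 = 1 / mm) :
    ∀ θ ∈ Set.Icc (0 : ℝ) (π / 2),
      R θ = Real.sin θ * Real.cos θ /
        Real.sqrt (mp ^ 2 * Real.sin θ ^ 2 + mm ^ 2 * Real.cos θ ^ 2) := by
  set q : ℝ → ℝ := fun t => 1 + 3 * mm ^ 2 * mp ^ 2 /
    (mm ^ 2 * Real.cos t ^ 2 + mp ^ 2 * Real.sin t ^ 2) ^ 2 with hqdef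
  set m : ℝ := min (mm ^ 2) (mp ^ 2) with hmdef
  have hm : 0 < m := lt_min (by positivity) (by positivity)
  have hEq : ∀ t, mm ^ 2 * Real.cos t ^ 2 + mp ^ 2 * Real.sin t ^ 2 = Dd mm mp t := by
    intro t; unfold Dd; ring
  set Kr : ℝ := 1 + 3 * mm ^ 2 * mp ^ 2 / m ^ 2 with hKrdef
  have hKr1 : 1 ≤ Kr := by
    have : 0 ≤ 3 * mm ^ 2 * mp ^ 2 / m ^ 2 := by positivity
    simp only [hKrdef]; linarith
  have hq1 : ∀ t, 1 ≤ q t := by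
    intro t
    have : 0 ≤ 3 * mm ^ 2 * mp ^ 2 /
        (mm ^ 2 * Real.cos t ^ 2 + mp ^ 2 * Real.sin t ^ 2) ^ 2 := by
      rw [hEq]
      positivity
    simp only [hqdef]; linarith
  have hqK : ∀ t, q t ≤ Kr := by
    intro t
    have h1 : m ≤ mm ^ 2 * Real.cos t ^ 2 + mp ^ 2 * Real.sin t ^ 2 := by
      rw [hEq]; exact Dd_ge t
    have h2 : m ^ 2 ≤ (mm ^ 2 * Real.cos t ^ 2 + mp ^ 2 * Real.sin t ^ 2) ^ 2 := by
      have := hm.le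
      nlinarith
    simp only [hqdef, hKrdef]
    have : 3 * mm ^ 2 * mp ^ 2 / (mm ^ 2 * Real.cos t ^ 2 + mp ^ 2 * Real.sin t ^ 2) ^ 2
        ≤ 3 * mm ^ 2 * mp ^ 2 / m ^ 2 := by
      gcongr
    linarith
  set v : ℝ → ℝ × ℝ → ℝ × ℝ := fun t p => (p.2, -(p.1) * q t) with hvdef
  set K : NNReal := Real.toNNReal Kr with hKdef
  have hKval : (K : ℝ) = Kr := Real.coe_toNNReal _ (by linarith)
  have hv : ∀ t, LipschitzWith K (v t) := by
    intro t
    apply LipschitzWith.of_dist_le_mul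
    intro x y
    rw [Prod.dist_eq, Prod.dist_eq, hKval]
    simp only [hvdef, Real.dist_eq]
    have hq0 : 0 ≤ q t := le_trans zero_le_one (hq1 t)
    have habs : |(-(x.1) * q t) - (-(y.1) * q t)| = q t * |x.1 - y.1| := by
      rw [show (-(x.1) * q t) - (-(y.1) * q t) = q t * (y.1 - x.1) by ring, abs_mul,
        abs_of_nonneg hq0, abs_sub_comm]
    have hmax0 : (0:ℝ) ≤ max |x.1 - y.1| |x.2 - y.2| :=
      le_trans (abs_nonneg _) (le_max_left _ _)
    apply max_le
    · calc |x.2 - y.2| ≤ max |x.1 - y.1| |x.2 - y.2| := le_max_right _ _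
        _ ≤ Kr * max |x.1 - y.1| |x.2 - y.2| := le_mul_of_one_le_left hmax0 hKr1
    · rw [habs]
      calc q t * |x.1 - y.1| ≤ Kr * |x.1 - y.1| :=
            mul_le_mul_of_nonneg_right (hqK t) (abs_nonneg _)
        _ ≤ Kr * max |x.1 - y.1| |x.2 - y.2| := by
            apply mul_le_mul_of_nonneg_left (le_max_left _ _); linarith
  set f : ℝ → ℝ × ℝ := fun t => (R t, R' t) with hfdef
  set g : ℝ → ℝ × ℝ := fun t => (Sc mm mp t, Sc' mm mp t) with hgdef
  have hf' : ∀ t ∈ Set.Ico (0:ℝ) (π/2), HasDerivWithinAt f (v t (f t)) (Set.Ici t) t := by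
    intro t ht
    have ht' : t ∈ Set.Icc (0:ℝ) (π/2) := Set.Ico_subset_Icc_self ht
    exact (((hR t ht').prodMk (hR' t ht'))).hasDerivWithinAt
  have hg' : ∀ t ∈ Set.Ico (0:ℝ) (π/2), HasDerivWithinAt g (v t (g t)) (Set.Ici t) t := by
    intro t ht
    exact (((hasDerivAt_Sc hmm hmp t).prodMk (hasDerivAt_Sc' hmm hmp t))).hasDerivWithinAt
  have hfc : ContinuousOn f (Set.Icc (0:ℝ) (π/2)) := by
    intro t ht
    exact (((hR t ht).continuousAt).prodMk ((hR' t ht).continuousAt)).continuousWithinAt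
  have hgc : ContinuousOn g (Set.Icc (0:ℝ) (π/2)) := by
    intro t ht
    exact (((hasDerivAt_Sc hmm hmp t).continuousAt).prodMk
      ((hasDerivAt_Sc' hmm hmp t).continuousAt)).continuousWithinAt
  have hD0 : Dd mm mp 0 = mm ^ 2 := by unfold Dd; simp
  have hinit : f 0 = g 0 := by
    have h1 : Sc mm mp 0 = 0 := by unfold Sc; simp
    have h2 : Sc' mm mp 0 = 1 / mm := by
      unfold Sc'
      rw [hD0]
      simp [Real.sqrt_sq hmm.le]
      field_simp
    simp only [hfdef, hgdef, h0, h0', h1, h2]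
  have huniq := ODE_solution_unique hv hfc hf' hgc hg' hinit
  intro θ hθ
  have hfst : R θ = Sc mm mp θ := congrArg Prod.fst (huniq hθ)
  rw [hfst]; unfold Sc Dd; rfl
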